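/- Let constants η > 0, b3 > 0, K1 ≥ 0, K2 ≥ 0, L_α ≥ 0, b2 > 0 and ν ∈ (0,1) be given, and set ε̄ := min{ 4ηνb3/(K1² + 4ηK2), (1-ν)b3/(L_α·b2) } (with the convention that a term is +∞ if its denominator vanishes). Then for every ε ∈ (0, ε̄) and every r ≥ 0 and v ∈ ℝ: η + (b3/ε - K2)·r² - K1·r - L_α·b2·r² ≥ 0. -/

import Mathlib

theorem core_quantitative_estimate (η b3 K1 K2 Lα b2 ν ε : ℝ)
    (hη : η > 0) (hb3 : b3 > 0) (hK1 : K1 ≥ 0) (hK2 : K2 ≥ 0)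
    (hLα : Lα ≥ 0) (hb2 : b2 > 0) (hν : 0 < ν) (hν1 : ν < 1)
    (hε0 : 0 < ε)
    (hε1 : K1 ^ 2 + 4 * η * K2 = 0 ∨ ε < 4 * η * ν * b3 / (K1 ^ 2 + 4 * η * K2))
    (hε2 : Lα * b2 = 0 ∨ ε < (1 - ν) * b3 / (Lα * b2)) :
    ∀ r : ℝ, r ≥ 0 → ∀ _v : ℝ,
      η + (b3 / ε - K2) * r ^ 2 - K1 * r - Lα * b2 * r ^ 2 ≥ 0 := by
  intro r hr _v
  have h1 : ε * (K1 ^ 2 + 4 * η * K2) ≤ 4 * η * ν * b3 := by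
    rcases hε1 with h | h
    · rw [h, mul_zero]
      positivity
    · have hd : 0 ≤ K1 ^ 2 + 4 * η * K2 := by positivity
      rcases hd.eq_or_lt with h0 | h0
      · rw [← h0, div_zero] at h; linarith
      · rw [lt_div_iff₀ h0] at h; linarith
  have h2 : ε * (Lα * b2) ≤ (1 - ν) * b3 := by
    rcases hε2 with h | h
    · rw [h, mul_zero]
      nlinarith
    · have hd : 0 ≤ Lα * b2 := by positivity
      rcases hd.eq_or_lt with h0 | h0
      · rw [← h0, div_zero] at h; linarith
      · rw [lt_div_iff₀ h0] at h; linarith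
  have key : 0 ≤ η * ε + (b3 - ε * K2) * r ^ 2 - ε * K1 * r - ε * (Lα * b2) * r ^ 2 := by
    nlinarith [mul_le_mul_of_nonneg_right h1 (sq_nonneg r),
      mul_le_mul_of_nonneg_right h2 (sq_nonneg r),
      mul_nonneg hε0.le (sq_nonneg (K1 * r - 2 * η)), sq_nonneg r]
  have heq : η + (b3 / ε - K2) * r ^ 2 - K1 * r - Lα * b2 * r ^ 2
      = (η * ε + (b3 - ε * K2) * r ^ 2 - ε * K1 * r - ε * (Lα * b2) * r ^ 2) / ε := by
    field_simp
  rw [ge_iff_le, heq]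
  exact div_nonneg key hε0.le
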